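/- Let F, Q : ℝ → ℝ, A, κ ∈ ℝ with Q(u) = A·u·F(u) + κ·u for all u. Suppose Φ : ℝⁿ → ℝ is twice continuously differentiable with ΔΦ + κ·Φ = 0. Then u(x,t) = e^{A t}·Φ(x) satisfies the reaction-diffusion equation F(u)·∂u/∂t = Δu + Q(u), where Δ is the spatial Laplacian. -/

import Mathlib

/-- The Laplacian of a real-valued function on `ℝⁿ`, as the sum of second
directional derivatives along the coordinate directions. -/
noncomputable def lap {n : ℕ} (f : EuclideanSpace ℝ (Fin n) → ℝ)
    (x : EuclideanSpace ℝ (Fin n)) : ℝ :=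
  ∑ i : Fin n, iteratedFDeriv ℝ 2 f x
    ![EuclideanSpace.single i 1, EuclideanSpace.single i 1]

theorem nonclassical_separation (n : ℕ) (F Q : ℝ → ℝ) (A κ : ℝ)
    (hQ : ∀ u, Q u = A * u * F u + κ * u)
    (Φ : EuclideanSpace ℝ (Fin n) → ℝ) (hΦ : ContDiff ℝ 2 Φ)
    (hHelm : ∀ x, lap Φ x + κ * Φ x = 0) :
    ∀ (x : EuclideanSpace ℝ (Fin n)) (t : ℝ),
      F (Real.exp (A * t) * Φ x) * deriv (fun s => Real.exp (A * s) * Φ x) t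
        = lap (fun y => Real.exp (A * t) * Φ y) x
          + Q (Real.exp (A * t) * Φ x) := by
  intro x t
  have hderiv : deriv (fun s => Real.exp (A * s) * Φ x) t
      = A * Real.exp (A * t) * Φ x := by
    have : HasDerivAt (fun s => Real.exp (A * s) * Φ x)
        (Real.exp (A * t) * A * Φ x) t := by
      have h1 : HasDerivAt (fun s => A * s) A t := by
        simpa using (hasDerivAt_id t).const_mul A
      exact ((h1.exp)).mul_const (Φ x)
    rw [this.deriv]; ring
  have hlap : lap (fun y => Real.exp (A * t) * Φ y) x
      = Real.exp (A * t) * lap Φ x := by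
    unfold lap
    rw [Finset.mul_sum]
    refine Finset.sum_congr rfl fun i _ => ?_
    have : (fun y => Real.exp (A * t) * Φ y) = Real.exp (A * t) • Φ := rfl
    rw [this, iteratedFDeriv_const_smul_apply (i := 2) (hΦ.contDiffAt (x := x))]
    simp
  have hΦx : lap Φ x = -(κ * Φ x) := by linarith [hHelm x]
  rw [hderiv, hlap, hQ, hΦx]
  ring
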